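/- Fix N ≥ 2, m ≥ 1, dimensions n_1,…,n_N ≥ 1, matrices A_i ∈ ℝ^{m×n_i}, b ∈ ℝ^m, convex f_i : ℝ^{n_i} → ℝ, ρ > 0, 0 < γ < 2, Δ > 0, and symmetric P_i ∈ ℝ^{n_i×n_i} with P_i − ρ(N/(2−γ) − 1)‖A_i‖²·I positive semidefinite, where ‖A_i‖ is the spectral norm. Let (x*, λ*) satisfy Σ_i A_i x_i* = b and L(x, λ*) ≥ L(x*, λ*) for all x. Let sequences x_i^{[k]} ∈ ℝ^{n_i}, λ̂^{[k]}, d̂^{[k]} ∈ ℝ^m (k ≥ 1) satisfy for every k: (i) ‖d̂^{[k]} − (Σ_i A_i x_i^{[k]} − b)‖ ≤ 2√m·Δ; (ii) λ̂^{[k+1]} = λ̂^{[k]} + γρ·d̂^{[k+1]}; (iii) for each i there is a subgradient g_i of f_i at x_i^{[k+1]} with g_i + A_iᵀλ̂^{[k]} + ρ·A_iᵀ(A_i(x_i^{[k+1]} − x_i^{[k]}) + d̂^{[k]}) + P_i(x_i^{[k+1]} − x_i^{[k]}) = 0; and (iv) ‖λ̂^{[k]} − λ*‖ ≤ M_λ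 and ‖d̂^{[k]}‖ ≤ M_x for constants M_λ, M_x ≥ 0. Then for every K ≥ 1: L( (1/K)Σ_{k=1}^K x^{[k+1]}, λ* ) − L(x*, λ*) ≤ (1/K) Σ_{k=1}^K ( L(x^{[k+1]}, λ*) − L(x*, λ*) ) ≤ C/K + E_Δ, where C := ½ Σ_i ‖x_i^{[1]} − x_i*‖²_{ρA_iᵀA_i + P_i} + (1/(2γρ))·‖λ̂^{[1]} − λ*‖² and E_Δ := (8/γ + 4|γ−1|/γ + 2)·√m·Δ·M_λ + 4ρ√m·Δ·M_x. -/

import Mathlib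

open scoped RealInnerProductSpace

/-- Weighted squared seminorm `‖v‖²_M := vᵀ M v`. -/
noncomputable def wnormSq {k : ℕ} (M : Matrix (Fin k) (Fin k) ℝ)
    (v : EuclideanSpace ℝ (Fin k)) : ℝ :=
  dotProduct v (M.mulVec v)

/-- The spectral (ℓ²-operator) norm of a real matrix. -/
noncomputable def specNorm {m k : ℕ} (A : Matrix (Fin m) (Fin k) ℝ) : ℝ :=
  ‖LinearMap.toContinuousLinearMap (Matrix.toEuclideanLin A)‖

/-- The Lagrangian `L(x, λ) := ∑_i f_i(x_i) + ⟨λ, ∑_i A_i x_i − b⟩`. -/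
noncomputable def Lag {N m : ℕ} {n : Fin N → ℕ}
    (f : ∀ i, EuclideanSpace ℝ (Fin (n i)) → ℝ)
    (A : ∀ i, Matrix (Fin m) (Fin (n i)) ℝ) (b : EuclideanSpace ℝ (Fin m))
    (x : ∀ i, EuclideanSpace ℝ (Fin (n i))) (lam : EuclideanSpace ℝ (Fin m)) : ℝ :=
  (∑ i, f i (x i))
    + ⟪lam, (∑ i, (WithLp.toLp 2 ((A i).mulVec (x i)))) - b⟫

/-- The gradient of the smooth part of the local proximal subproblem,
`Aᵀλ̂ + ρ·Aᵀ(A(xp − x) + d̂) + P(xp − x)`. -/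
noncomputable def gradTerm {m k : ℕ} (A : Matrix (Fin m) (Fin k) ℝ)
    (P : Matrix (Fin k) (Fin k) ℝ) (ρ : ℝ)
    (lamHat dHat : EuclideanSpace ℝ (Fin m))
    (x xp : EuclideanSpace ℝ (Fin k)) : EuclideanSpace ℝ (Fin k) :=
  WithLp.toLp 2 (A.transpose.mulVec lamHat
    + ρ • A.transpose.mulVec
        ((WithLp.toLp 2 (A.mulVec (xp - x))) + dHat)
    + P.mulVec (xp - x))

open Matrix

namespace QADMM

local notation "ES" k => EuclideanSpace ℝ (Fin k)

lemma inner_eq_dot {k : ℕ} (x y : ES k) : ⟪x, y⟫ = x ⬝ᵥ y := by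
  simp [PiLp.inner_apply, RCLike.inner_apply, dotProduct, mul_comm]

lemma inner_mulVec {m k : ℕ} (A : Matrix (Fin m) (Fin k) ℝ) (u : ES m) (w : ES k) :
    ⟪u, (WithLp.toLp 2 <| A.mulVec w)⟫ = ⟪(WithLp.toLp 2 <| A.transpose.mulVec u), w⟫ := by
  rw [inner_eq_dot, inner_eq_dot]
  rw [Matrix.dotProduct_mulVec]
  congr 1
  exact (Matrix.mulVec_transpose A u).symm

lemma wnormSq_eq_inner {k : ℕ} (M : Matrix (Fin k) (Fin k) ℝ) (v : ES k) :
    wnormSq M v = ⟪v, (WithLp.toLp 2 <| M.mulVec v)⟫ := by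
  rw [inner_eq_dot]; rfl

lemma wnormSq_nonneg {k : ℕ} {M : Matrix (Fin k) (Fin k) ℝ} (hM : M.PosSemidef) (v : ES k) :
    0 ≤ wnormSq M v := by
  simpa [wnormSq] using hM.dotProduct_mulVec_nonneg v.ofLp

lemma inner_symm_mat {k : ℕ} {M : Matrix (Fin k) (Fin k) ℝ} (hM : M.IsSymm) (a b : ES k) :
    ⟪a, (WithLp.toLp 2 <| M.mulVec b)⟫ = ⟪b, (WithLp.toLp 2 <| M.mulVec a)⟫ := by
  rw [inner_eq_dot, inner_eq_dot, Matrix.dotProduct_mulVec, ← Matrix.mulVec_transpose, hM,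
    dotProduct_comm]

lemma mulVec_sub' {m k : ℕ} (M : Matrix (Fin m) (Fin k) ℝ) (x y : ES k) :
    (WithLp.toLp 2 <| M.mulVec (x - y)) =
      (WithLp.toLp 2 <| M.mulVec x) - (WithLp.toLp 2 <| M.mulVec y) :=
  by rw [Matrix.mulVec_sub]; rfl

lemma mulVec_neg' {m k : ℕ} (M : Matrix (Fin m) (Fin k) ℝ) (v : ES k) :
    (WithLp.toLp 2 <| M.mulVec (-v)) = -(WithLp.toLp 2 <| M.mulVec v) :=
  by rw [Matrix.mulVec_neg]; rfl

lemma dot_neg_right' {k : ℕ} (u : Fin k → ℝ) (w : ES k) :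
    u ⬝ᵥ (-w : ES k) = -(u ⬝ᵥ (w : Fin k → ℝ)) :=
  dotProduct_neg u w

lemma add_dot' {k : ℕ} (u v : ES k) (w : Fin k → ℝ) :
    ((u + v : ES k) : Fin k → ℝ) ⬝ᵥ w = (u : Fin k → ℝ) ⬝ᵥ w + (v : Fin k → ℝ) ⬝ᵥ w :=
  add_dotProduct u v w

/-- three point identity: `⟪a, M b⟫ = (‖a‖²_M + ‖b‖²_M − ‖b−a‖²_M)/2` for symmetric `M`. -/
lemma inner_mulVec_threePoint {k : ℕ} {M : Matrix (Fin k) (Fin k) ℝ} (hM : M.IsSymm) (a b : ES k) :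
    ⟪a, (WithLp.toLp 2 <| M.mulVec b)⟫
      = (wnormSq M a + wnormSq M b - wnormSq M (b - a)) / 2 := by
  have h : wnormSq M (b - a)
      = wnormSq M b - 2 * ⟪a, (WithLp.toLp 2 <| M.mulVec b)⟫ + wnormSq M a := by
    rw [wnormSq_eq_inner, WithLp.ofLp_sub, mulVec_sub', inner_sub_left, inner_sub_right, inner_sub_right,
      wnormSq_eq_inner, wnormSq_eq_inner, inner_symm_mat hM b a]
    ring
  linarith

lemma norm_mulVec_le {m k : ℕ} (A : Matrix (Fin m) (Fin k) ℝ) (v : ES k) :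
    ‖(WithLp.toLp 2 <| A.mulVec v)‖ ≤ specNorm A * ‖v‖ := by
  have h : (LinearMap.toContinuousLinearMap (Matrix.toEuclideanLin A)) v
      = (WithLp.toLp 2 <| A.mulVec v) := rfl
  have := (LinearMap.toContinuousLinearMap (Matrix.toEuclideanLin A)).le_opNorm v
  rw [h] at this
  simpa [specNorm] using this

lemma wnormSq_smul {k : ℕ} (c : ℝ) (M : Matrix (Fin k) (Fin k) ℝ) (v : ES k) :
    wnormSq (c • M) v = c * wnormSq M v := by
  simp [wnormSq, Matrix.smul_mulVec, dotProduct_smul, smul_eq_mul]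

lemma wnormSq_add_mat {k : ℕ} (M P : Matrix (Fin k) (Fin k) ℝ) (v : ES k) :
    wnormSq (M + P) v = wnormSq M v + wnormSq P v := by
  simp [wnormSq, Matrix.add_mulVec, dotProduct_add]

lemma wnormSq_sub_mat {k : ℕ} (M P : Matrix (Fin k) (Fin k) ℝ) (v : ES k) :
    wnormSq (M - P) v = wnormSq M v - wnormSq P v := by
  simp [wnormSq, Matrix.sub_mulVec, dotProduct_sub]

lemma wnormSq_one {k : ℕ} (c : ℝ) (v : ES k) :
    wnormSq (c • (1 : Matrix (Fin k) (Fin k) ℝ)) v = c * ‖v‖ ^ 2 := by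
  rw [wnormSq_smul, wnormSq]
  rw [Matrix.one_mulVec, ← inner_eq_dot v v, real_inner_self_eq_norm_sq]

lemma wnormSq_transpose_mul {m k : ℕ} (A : Matrix (Fin m) (Fin k) ℝ) (v : ES k) :
    wnormSq (A.transpose * A) v = ‖(WithLp.toLp 2 <| A.mulVec v)‖ ^ 2 := by
  have h1 : wnormSq (A.transpose * A) v
      = ⟪v, (WithLp.toLp 2 <| A.transpose.mulVec ((WithLp.toLp 2 <| A.mulVec v)))⟫ := by
    rw [inner_eq_dot]
    show v ⬝ᵥ _ = v ⬝ᵥ _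
    rw [Matrix.mulVec_mulVec]
  have h2 := inner_mulVec A.transpose v ((WithLp.toLp 2 <| A.mulVec v))
  rw [h1, h2, Matrix.transpose_transpose]
  exact real_inner_self_eq_norm_sq _

lemma young_ineq (a b c : ℝ) (hc : 0 < c) : a * b ≤ c / 2 * b ^ 2 + a ^ 2 / (2 * c) := by
  have h2 : 0 < 2 * c := by linarith
  have key : c / 2 * b ^ 2 + a ^ 2 / (2 * c) - a * b = (a - c * b) ^ 2 / (2 * c) := by
    field_simp; ring
  linarith [key, div_nonneg (sq_nonneg (a - c * b)) h2.le]

lemma sum_telescope_Icc (T : ℕ → ℝ) (K : ℕ) (hK : 1 ≤ K) :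
    ∑ j ∈ Finset.Icc 1 K, (T j - T (j + 1)) = T 1 - T (K + 1) := by
  induction K, hK using Nat.le_induction with
  | base => simp
  | succ K hK ih =>
      rw [Finset.sum_Icc_succ_top (by omega), ih]; ring

lemma norm_sum_sq_le {m : ℕ} {ι : Type*} (s : Finset ι) (u : ι → ES m) :
    ‖∑ i ∈ s, u i‖ ^ 2 ≤ (s.card : ℝ) * ∑ i ∈ s, ‖u i‖ ^ 2 := by
  calc ‖∑ i ∈ s, u i‖ ^ 2 ≤ (∑ i ∈ s, ‖u i‖) ^ 2 := by
        exact pow_le_pow_left₀ (norm_nonneg _) (norm_sum_le s u) 2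
    _ ≤ (s.card : ℝ) * ∑ i ∈ s, ‖u i‖ ^ 2 := sq_sum_le_card_mul_sum_sq

end QADMM

set_option maxHeartbeats 2000000 in
open QADMM in
/-- **Theorem 1 (eqs. (12)–(14)): sublinear ergodic convergence of the
quantized distributed proximal Jacobian ADMM.**  For every `K ≥ 1`,
`L((1/K)∑_{k=1}^K x^{[k+1]}, λ*) − L(x*, λ*)
  ≤ (1/K)∑_{k=1}^K (L(x^{[k+1]}, λ*) − L(x*, λ*)) ≤ C/K + E_Δ`. -/
theorem qdpjadmm_sublinear_convergence
    (N m : ℕ) (hN : 2 ≤ N) (hm : 1 ≤ m)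
    (n : Fin N → ℕ) (hn : ∀ i, 1 ≤ n i)
    (A : ∀ i, Matrix (Fin m) (Fin (n i)) ℝ)
    (b : EuclideanSpace ℝ (Fin m))
    (f : ∀ i, EuclideanSpace ℝ (Fin (n i)) → ℝ)
    (hf : ∀ i, ConvexOn ℝ Set.univ (f i))
    (ρ γ Δ : ℝ) (hρ : 0 < ρ) (hγ₀ : 0 < γ) (hγ₂ : γ < 2) (hΔ : 0 < Δ)
    (P : ∀ i, Matrix (Fin (n i)) (Fin (n i)) ℝ)
    (hPsymm : ∀ i, (P i).IsSymm)
    (hPpsd : ∀ i,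
      (P i - (ρ * ((N : ℝ) / (2 - γ) - 1) * specNorm (A i) ^ 2) • 1).PosSemidef)
    (xs : ∀ i, EuclideanSpace ℝ (Fin (n i)))
    (lamStar : EuclideanSpace ℝ (Fin m))
    (hfeas : (∑ i, (WithLp.toLp 2 <| (A i).mulVec (xs i))) = b)
    (hsaddle : ∀ x : ∀ i, EuclideanSpace ℝ (Fin (n i)),
      Lag f A b xs lamStar ≤ Lag f A b x lamStar)
    (x : ℕ → ∀ i, EuclideanSpace ℝ (Fin (n i)))
    (lamHat dHat : ℕ → EuclideanSpace ℝ (Fin m))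
    (Mlam Mx : ℝ) (hMlam : 0 ≤ Mlam) (hMx : 0 ≤ Mx)
    (hd : ∀ k, 1 ≤ k →
      ‖dHat k - ((∑ i, (WithLp.toLp 2 <| (A i).mulVec (x k i))) - b)‖
        ≤ 2 * Real.sqrt m * Δ)
    (hdual : ∀ k, 1 ≤ k → lamHat (k + 1) = lamHat k + (γ * ρ) • dHat (k + 1))
    (hstat : ∀ k, 1 ≤ k → ∀ i, ∃ g : EuclideanSpace ℝ (Fin (n i)),
      (∀ z, f i (x (k + 1) i) + ⟪g, z - x (k + 1) i⟫ ≤ f i z) ∧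
      g + gradTerm (A i) (P i) ρ (lamHat k) (dHat k) (x k i) (x (k + 1) i) = 0)
    (hbdd : ∀ k, 1 ≤ k → ‖lamHat k - lamStar‖ ≤ Mlam ∧ ‖dHat k‖ ≤ Mx) :
    ∀ K : ℕ, 1 ≤ K →
      Lag f A b (fun i => (K : ℝ)⁻¹ • ∑ k ∈ Finset.Icc 1 K, x (k + 1) i) lamStar
          - Lag f A b xs lamStar
        ≤ (K : ℝ)⁻¹ * ∑ k ∈ Finset.Icc 1 K,
            (Lag f A b (x (k + 1)) lamStar - Lag f A b xs lamStar) ∧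
      (K : ℝ)⁻¹ * ∑ k ∈ Finset.Icc 1 K,
            (Lag f A b (x (k + 1)) lamStar - Lag f A b xs lamStar)
        ≤ ((1 / 2) * ∑ i, wnormSq (ρ • ((A i).transpose * A i) + P i) (x 1 i - xs i)
              + (1 / (2 * γ * ρ)) * ‖lamHat 1 - lamStar‖ ^ 2) / K
          + ((8 / γ + 4 * |γ - 1| / γ + 2) * Real.sqrt m * Δ * Mlam
              + 4 * ρ * Real.sqrt m * Δ * Mx) := by
  intro K hK
  have hγρ : 0 < γ * ρ := mul_pos hγ₀ hρ
  have h2γ : 0 < 2 - γ := by linarith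
  have hsm : 0 ≤ Real.sqrt m := Real.sqrt_nonneg m
  have hKne : ((K : ℝ)) ≠ 0 := Nat.cast_ne_zero.mpr (by omega)
  have hK0 : (0:ℝ) < (K:ℝ) := by exact_mod_cast Nat.pos_of_ne_zero (by omega)
  have hcard : (Finset.Icc 1 K).card = K := by rw [Nat.card_Icc]; omega
  set δ : ℝ := 2 * Real.sqrt m * Δ with hδdef
  have hδ0 : 0 ≤ δ := by rw [hδdef]; positivity
  have hν1 : (1:ℝ) ≤ (N : ℝ) / (2 - γ) := by
    rw [le_div_iff₀ h2γ]
    have h2N : (2:ℝ) ≤ (N:ℝ) := by exact_mod_cast hN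
    linarith
  have hc0 : 0 ≤ ρ * ((N : ℝ) / (2 - γ) - 1) := mul_nonneg hρ.le (by linarith)
  set Gm : ∀ i, Matrix (Fin (n i)) (Fin (n i)) ℝ :=
    fun i => ρ • ((A i).transpose * A i) + P i with hGm
  have hGsymm : ∀ i, (Gm i).IsSymm := by
    intro i
    show (Gm i).transpose = Gm i
    simp only [hGm, Matrix.transpose_add, Matrix.transpose_smul, Matrix.transpose_mul,
      Matrix.transpose_transpose]
    rw [hPsymm i]
  have hGexp : ∀ i (v : EuclideanSpace ℝ (Fin (n i))),
      wnormSq (Gm i) v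
        = ρ * ‖(WithLp.toLp 2 <| (A i).mulVec v)‖ ^ 2
            + wnormSq (P i) v := by
    intro i v
    simp only [hGm]
    rw [wnormSq_add_mat, wnormSq_smul, wnormSq_transpose_mul]
  have hPlow : ∀ i (v : EuclideanSpace ℝ (Fin (n i))),
      ρ * ((N : ℝ) / (2 - γ) - 1) * specNorm (A i) ^ 2 * ‖v‖ ^ 2 ≤ wnormSq (P i) v := by
    intro i v
    have h := wnormSq_nonneg (hPpsd i) v
    rw [wnormSq_sub_mat, wnormSq_one] at h
    linarith
  have hGnn : ∀ i (v : EuclideanSpace ℝ (Fin (n i))), 0 ≤ wnormSq (Gm i) v := by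
    intro i v
    rw [hGexp i v]
    have h1 := hPlow i v
    have h2 : 0 ≤ ρ * ((N : ℝ) / (2 - γ) - 1) * specNorm (A i) ^ 2 * ‖v‖ ^ 2 :=
      mul_nonneg (mul_nonneg hc0 (sq_nonneg _)) (sq_nonneg _)
    have h3 : 0 ≤ ρ * ‖(WithLp.toLp 2 <| (A i).mulVec v)‖ ^ 2 :=
      mul_nonneg hρ.le (sq_nonneg _)
    linarith
  set T : ℕ → ℝ := fun j => (1 / 2) * ∑ i, wnormSq (Gm i) (x j i - xs i)
      + (1 / (2 * γ * ρ)) * ‖lamHat j - lamStar‖ ^ 2 with hT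
  have h2γρ : (0:ℝ) < 2 * γ * ρ := mul_pos (mul_pos two_pos hγ₀) hρ
  have hTnn : ∀ j, 0 ≤ T j := by
    intro j
    simp only [hT]
    have h1 : 0 ≤ ∑ i, wnormSq (Gm i) (x j i - xs i) :=
      Finset.sum_nonneg fun i _ => hGnn i _
    have h2 : 0 ≤ (1 / (2 * γ * ρ)) * ‖lamHat j - lamStar‖ ^ 2 :=
      mul_nonneg (le_of_lt (by positivity)) (sq_nonneg _)
    linarith
  set Ebd : ℝ := (1 + 4 / γ) * δ * Mlam + ρ * δ * Mx with hE
  set R : ℕ → EuclideanSpace ℝ (Fin m) :=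
    fun j => (∑ i, (WithLp.toLp 2 <| (A i).mulVec (x j i))) - b with hR
  -- ================= per-iteration key inequality =================
  have key : ∀ j, 1 ≤ j →
      Lag f A b (x (j + 1)) lamStar - Lag f A b xs lamStar ≤ (T j - T (j + 1)) + Ebd := by
    intro j hj
    have hj1 : 1 ≤ j + 1 := by omega
    obtain ⟨hblam_c, hbd_c⟩ := hbdd j hj
    obtain ⟨hblam_p, hbd_p⟩ := hbdd (j + 1) hj1
    set ec : EuclideanSpace ℝ (Fin m) := dHat j - R j with hec
    set ep : EuclideanSpace ℝ (Fin m) := dHat (j + 1) - R (j + 1) with hep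
    have hecn : ‖ec‖ ≤ δ := by
      have := hd j hj
      simpa [hec, hR] using this
    have hepn : ‖ep‖ ≤ δ := by
      have := hd (j + 1) hj1
      simpa [hep, hR] using this
    have hfeas0 : (∑ i, (WithLp.toLp 2 <| (A i).mulVec (xs i))) - b = 0 := by
      rw [hfeas]; exact sub_self b
    have hLagdiff : Lag f A b (x (j + 1)) lamStar - Lag f A b xs lamStar
        = (∑ i, (f i (x (j + 1) i) - f i (xs i))) + ⟪lamStar, R (j + 1)⟫ := by
      simp only [Lag, hR, hfeas0, inner_zero_right, Finset.sum_sub_distrib]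
      ring
    have hconv : ∀ i, f i (x (j + 1) i) - f i (xs i)
        ≤ ⟪gradTerm (A i) (P i) ρ (lamHat j) (dHat j) (x j i) (x (j + 1) i),
            xs i - x (j + 1) i⟫ := by
      intro i
      obtain ⟨g, hsub, heq⟩ := hstat j hj i
      have hg : g = -gradTerm (A i) (P i) ρ (lamHat j) (dHat j) (x j i) (x (j + 1) i) :=
        eq_neg_of_add_eq_zero_left heq
      have h := hsub (xs i)
      rw [hg, inner_neg_left] at h
      linarith
    -- adjoint helpers
    have hadj : ∀ i (u : Fin m → ℝ) (s : Fin (n i) → ℝ),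
        ((A i).transpose *ᵥ u) ⬝ᵥ s = u ⬝ᵥ ((A i) *ᵥ s) := by
      intro i u s
      rw [Matrix.mulVec_transpose, ← Matrix.dotProduct_mulVec]
    have hadj2 : ∀ i (a : Fin (n i) → ℝ) (w : Fin m → ℝ),
        a ⬝ᵥ ((A i).transpose *ᵥ w) = ((A i) *ᵥ a) ⬝ᵥ w := by
      intro i a w
      rw [Matrix.dotProduct_mulVec, Matrix.vecMul_transpose]
    have hPd : ∀ i (a c : Fin (n i) → ℝ), a ⬝ᵥ ((P i) *ᵥ c) = ((P i) *ᵥ a) ⬝ᵥ c := by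
      intro i a c
      rw [Matrix.dotProduct_mulVec, ← Matrix.mulVec_transpose, hPsymm i]
    have hgrad : ∀ i,
        ⟪gradTerm (A i) (P i) ρ (lamHat j) (dHat j) (x j i) (x (j + 1) i),
            xs i - x (j + 1) i⟫
        = ⟪lamHat j,
              (WithLp.toLp 2 <| (A i).mulVec (xs i - x (j + 1) i))⟫
          + ρ * ⟪dHat j,
              (WithLp.toLp 2 <| (A i).mulVec (xs i - x (j + 1) i))⟫
          - ⟪x (j + 1) i - x j i,
              (WithLp.toLp 2 <| (Gm i).mulVec (x (j + 1) i - xs i))⟫ := by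
      intro i
      simp only [gradTerm, hGm]
      simp only [QADMM.inner_eq_dot]
      have hsv : xs i - x (j + 1) i = -(x (j + 1) i - xs i) := (neg_sub _ _).symm
      rw [hsv]
      simp only [add_dotProduct, smul_dotProduct, smul_eq_mul,
        Matrix.add_mulVec, Matrix.smul_mulVec, dotProduct_add,
        dotProduct_smul, ← Matrix.mulVec_mulVec, Matrix.mulVec_neg,
        dotProduct_neg, neg_dotProduct, hadj, hadj2, hPd,
        QADMM.mulVec_neg', QADMM.dot_neg_right', QADMM.add_dot', WithLp.ofLp_sub,
        WithLp.ofLp_neg, neg_sub, neg_add_eq_sub, Matrix.mulVec_sub, dotProduct_sub, sub_dotProduct]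
      ring
    have hsumAs : ∀ u : EuclideanSpace ℝ (Fin m),
        (∑ i, ⟪u, (WithLp.toLp 2 <| (A i).mulVec (xs i - x (j + 1) i))⟫) = -⟪u, R (j + 1)⟫ := by
      intro u
      rw [← inner_sum]
      have hs : (∑ i, (WithLp.toLp 2 <| (A i).mulVec (xs i - x (j + 1) i))) = -(R (j + 1)) := by
        simp only [QADMM.mulVec_sub', Finset.sum_sub_distrib, hR, hfeas]
        abel
      rw [hs, inner_neg_right]
    have hthree : ∀ i,
        ⟪x (j + 1) i - x j i,
            (WithLp.toLp 2 <| (Gm i).mulVec (x (j + 1) i - xs i))⟫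
        = (wnormSq (Gm i) (x (j + 1) i - x j i) + wnormSq (Gm i) (x (j + 1) i - xs i)
            - wnormSq (Gm i) (x j i - xs i)) / 2 := by
      intro i
      have h := QADMM.inner_mulVec_threePoint (hGsymm i)
        (x (j + 1) i - x j i) (x (j + 1) i - xs i)
      rw [show (x (j + 1) i - xs i) - (x (j + 1) i - x j i) = x j i - xs i from by abel] at h
      exact h
    -- summed first-order bound
    have hF2 : (∑ i, (f i (x (j + 1) i) - f i (xs i)))
        ≤ ∑ i, ⟪gradTerm (A i) (P i) ρ (lamHat j) (dHat j) (x j i) (x (j + 1) i),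
            xs i - x (j + 1) i⟫ :=
      Finset.sum_le_sum fun i _ => hconv i
    have hF3 : (∑ i, ⟪gradTerm (A i) (P i) ρ (lamHat j) (dHat j) (x j i) (x (j + 1) i),
            xs i - x (j + 1) i⟫)
        = -⟪lamHat j, R (j + 1)⟫ - ρ * ⟪dHat j, R (j + 1)⟫
          - (∑ i, wnormSq (Gm i) (x (j + 1) i - x j i)
              + ∑ i, wnormSq (Gm i) (x (j + 1) i - xs i)
              - ∑ i, wnormSq (Gm i) (x j i - xs i)) / 2 := by
      rw [Finset.sum_congr rfl fun i _ => (hgrad i).trans (by rw [hthree i])]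
      rw [Finset.sum_sub_distrib, Finset.sum_add_distrib, ← Finset.mul_sum,
        hsumAs (lamHat j), hsumAs (dHat j), ← Finset.sum_div,
        Finset.sum_sub_distrib, Finset.sum_add_distrib]
      ring
    -- dual-update identities
    have hdp : (γ * ρ) • dHat (j + 1) = lamHat (j + 1) - lamHat j := by
      rw [hdual j hj]; abel
    have hpol : ⟪lamStar - lamHat j, lamHat (j + 1) - lamHat j⟫
        = (‖lamHat (j + 1) - lamHat j‖ ^ 2 + ‖lamHat j - lamStar‖ ^ 2
            - ‖lamHat (j + 1) - lamStar‖ ^ 2) / 2 := by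
      have hn := norm_sub_sq_real (lamHat (j + 1) - lamHat j) (lamStar - lamHat j)
      rw [show lamHat (j + 1) - lamHat j - (lamStar - lamHat j)
            = lamHat (j + 1) - lamStar from by abel,
        real_inner_comm, norm_sub_rev lamStar] at hn
      linarith
    have hnormdp : ‖lamHat (j + 1) - lamHat j‖ ^ 2 = (γ * ρ) ^ 2 * ‖dHat (j + 1)‖ ^ 2 := by
      rw [← hdp, norm_smul, Real.norm_eq_abs, abs_of_pos hγρ, mul_pow]
    have e1 : (γ * ρ) * ⟪lamStar - lamHat j, dHat (j + 1)⟫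
        = ((γ * ρ) ^ 2 * ‖dHat (j + 1)‖ ^ 2 + ‖lamHat j - lamStar‖ ^ 2
            - ‖lamHat (j + 1) - lamStar‖ ^ 2) / 2 := by
      rw [← real_inner_smul_right, hdp, hpol, hnormdp]
    have h8 : ⟪lamStar - lamHat j, dHat (j + 1)⟫
        = (γ * ρ) / 2 * ‖dHat (j + 1)‖ ^ 2
          + 1 / (2 * γ * ρ) * ‖lamHat j - lamStar‖ ^ 2
          - 1 / (2 * γ * ρ) * ‖lamHat (j + 1) - lamStar‖ ^ 2 := by
      apply mul_left_cancel₀ (ne_of_gt hγρ)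
      rw [e1]
      field_simp
    have hRpd : R (j + 1) = dHat (j + 1) - ep := by rw [hep]; abel
    have hF6 : ⟪lamStar - lamHat j, R (j + 1)⟫
        = ⟪lamStar - lamHat j, dHat (j + 1)⟫ - ⟪lamStar - lamHat j, ep⟫ := by
      rw [hRpd, inner_sub_right]
    have hF5 : ⟪lamStar, R (j + 1)⟫ - ⟪lamHat j, R (j + 1)⟫
        = ⟪lamStar - lamHat j, R (j + 1)⟫ := (inner_sub_left _ _ _).symm
    have hF8 : ρ * ⟪dHat j, R (j + 1)⟫
        = ρ * ⟪dHat j, dHat (j + 1)⟫ - ρ * ⟪dHat j, ep⟫ := by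
      rw [hRpd, inner_sub_right]; ring
    have hDp : dHat (j + 1) - dHat j = (R (j + 1) - R j) + (ep - ec) := by
      rw [hep, hec]; abel
    have hsplit : ⟪dHat j, dHat (j + 1)⟫
        = ‖dHat (j + 1)‖ ^ 2 - ⟪R (j + 1) - R j, dHat (j + 1)⟫
          - ⟪ep - ec, dHat (j + 1)⟫ := by
      have h1 : ⟪dHat (j + 1) - dHat j, dHat (j + 1)⟫
          = ⟪R (j + 1) - R j, dHat (j + 1)⟫ + ⟪ep - ec, dHat (j + 1)⟫ := by
        rw [hDp, inner_add_left]
      have h2 : ⟪dHat (j + 1) - dHat j, dHat (j + 1)⟫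
          = ‖dHat (j + 1)‖ ^ 2 - ⟪dHat j, dHat (j + 1)⟫ := by
        rw [inner_sub_left, real_inner_self_eq_norm_sq]
      linarith
    have hyoung : ⟪R (j + 1) - R j, dHat (j + 1)⟫
        ≤ (2 - γ) / 2 * ‖dHat (j + 1)‖ ^ 2 + ‖R (j + 1) - R j‖ ^ 2 / (2 * (2 - γ)) :=
      (real_inner_le_norm _ _).trans (QADMM.young_ineq _ _ _ h2γ)
    have hyoungρ : ρ * ⟪R (j + 1) - R j, dHat (j + 1)⟫
        ≤ ρ * ((2 - γ) / 2) * ‖dHat (j + 1)‖ ^ 2 + ρ / (2 * (2 - γ)) * ‖R (j + 1) - R j‖ ^ 2 := by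
      have h := mul_le_mul_of_nonneg_left hyoung hρ.le
      calc ρ * ⟪R (j + 1) - R j, dHat (j + 1)⟫
          ≤ ρ * ((2 - γ) / 2 * ‖dHat (j + 1)‖ ^ 2 + ‖R (j + 1) - R j‖ ^ 2 / (2 * (2 - γ))) := h
        _ = ρ * ((2 - γ) / 2) * ‖dHat (j + 1)‖ ^ 2
            + ρ / (2 * (2 - γ)) * ‖R (j + 1) - R j‖ ^ 2 := by ring
    -- quantization error bounds
    have habs1 : |⟪lamStar - lamHat j, ep⟫| ≤ Mlam * δ := by
      have := abs_real_inner_le_norm (lamStar - lamHat j) ep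
      have hl : ‖lamStar - lamHat j‖ ≤ Mlam := by rw [norm_sub_rev]; exact hblam_c
      exact this.trans (mul_le_mul hl hepn (norm_nonneg _) hMlam)
    have habs2 : |⟪dHat j, ep⟫| ≤ Mx * δ := by
      have := abs_real_inner_le_norm (dHat j) ep
      exact this.trans (mul_le_mul hbd_c hepn (norm_nonneg _) hMx)
    have h13 : ρ * ⟪ep - ec, dHat (j + 1)⟫ ≤ 4 * δ * Mlam / γ := by
      rw [le_div_iff₀ hγ₀]
      have hee : ‖ep - ec‖ ≤ 2 * δ := (norm_sub_le _ _).trans (by linarith)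
      have hll : ‖lamHat (j + 1) - lamHat j‖ ≤ 2 * Mlam := by
        rw [show lamHat (j + 1) - lamHat j
            = (lamHat (j + 1) - lamStar) - (lamHat j - lamStar) from by abel]
        exact (norm_sub_le _ _).trans (by linarith)
      have habs : |⟪ep - ec, lamHat (j + 1) - lamHat j⟫| ≤ (2 * δ) * (2 * Mlam) :=
        (abs_real_inner_le_norm _ _).trans
          (mul_le_mul hee hll (norm_nonneg _) (by linarith))
      calc ρ * ⟪ep - ec, dHat (j + 1)⟫ * γ
          = ⟪ep - ec, (γ * ρ) • dHat (j + 1)⟫ := by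
            rw [real_inner_smul_right]; ring
        _ = ⟪ep - ec, lamHat (j + 1) - lamHat j⟫ := by rw [hdp]
        _ ≤ |⟪ep - ec, lamHat (j + 1) - lamHat j⟫| := le_abs_self _
        _ ≤ (2 * δ) * (2 * Mlam) := habs
        _ = 4 * δ * Mlam := by ring
    -- Cauchy–Schwarz over the sum and the step-size condition
    have hRd : R (j + 1) - R j = ∑ i, (WithLp.toLp 2 <| (A i).mulVec (x (j + 1) i - x j i)) := by
      simp only [hR, QADMM.mulVec_sub', Finset.sum_sub_distrib]
      abel
    have hCS : ‖R (j + 1) - R j‖ ^ 2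
        ≤ (N : ℝ) * ∑ i, ‖(WithLp.toLp 2 <| (A i).mulVec (x (j + 1) i - x j i))‖ ^ 2 := by
      rw [hRd]
      have := QADMM.norm_sum_sq_le (Finset.univ)
        (fun i => (WithLp.toLp 2 <| (A i).mulVec (x (j + 1) i - x j i)))
      simpa [Finset.card_univ] using this
    have hstepi : ∀ i, ρ * ((N : ℝ) / (2 - γ))
          * ‖(WithLp.toLp 2 <| (A i).mulVec (x (j + 1) i - x j i))‖ ^ 2
        ≤ wnormSq (Gm i) (x (j + 1) i - x j i) := by
      intro i
      have hAle := QADMM.norm_mulVec_le (A i) (x (j + 1) i - x j i)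
      have hA2 : ‖(WithLp.toLp 2 <| (A i).mulVec (x (j + 1) i - x j i))‖ ^ 2
          ≤ specNorm (A i) ^ 2 * ‖x (j + 1) i - x j i‖ ^ 2 := by
        have h1 := pow_le_pow_left₀ (norm_nonneg _) hAle 2
        rwa [mul_pow] at h1
      have hP := hPlow i (x (j + 1) i - x j i)
      rw [hGexp]
      simp only [WithLp.ofLp_sub]
      have hmul := mul_le_mul_of_nonneg_left hA2 hc0
      have hρA : 0 ≤ ρ * ‖(WithLp.toLp 2 <| (A i).mulVec (x (j + 1) i - x j i))‖ ^ 2 := mul_nonneg hρ.le (sq_nonneg _)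
      linarith only [hmul, hP, hρA]
    have hstepsum : ρ * ((N : ℝ) / (2 - γ))
          * (∑ i, ‖(WithLp.toLp 2 <| (A i).mulVec (x (j + 1) i - x j i))‖ ^ 2)
        ≤ ∑ i, wnormSq (Gm i) (x (j + 1) i - x j i) := by
      rw [Finset.mul_sum]
      exact Finset.sum_le_sum fun i _ => hstepi i
    have hquad : ρ / (2 * (2 - γ)) * ‖R (j + 1) - R j‖ ^ 2
        ≤ (∑ i, wnormSq (Gm i) (x (j + 1) i - x j i)) / 2 := by
      have hcoef : (0:ℝ) ≤ ρ / (2 * (2 - γ)) := div_nonneg hρ.le (by linarith)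
      have h1 := mul_le_mul_of_nonneg_left hCS hcoef
      have h2 : ρ / (2 * (2 - γ)) * ((N : ℝ) * ∑ i, ‖(WithLp.toLp 2 <| (A i).mulVec (x (j + 1) i - x j i))‖ ^ 2)
          = (1 / 2) * (ρ * ((N : ℝ) / (2 - γ))
              * (∑ i, ‖(WithLp.toLp 2 <| (A i).mulVec (x (j + 1) i - x j i))‖ ^ 2)) := by
        field_simp
      rw [h2] at h1
      linarith
    -- final assembly of the per-iteration inequality
    have hTj : T j - T (j + 1)
        = (1 / 2) * (∑ i, wnormSq (Gm i) (x j i - xs i))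
          - (1 / 2) * (∑ i, wnormSq (Gm i) (x (j + 1) i - xs i))
          + (1 / (2 * γ * ρ)) * ‖lamHat j - lamStar‖ ^ 2
          - (1 / (2 * γ * ρ)) * ‖lamHat (j + 1) - lamStar‖ ^ 2 := by
      simp only [hT]; ring
    have habs1' := abs_le.mp habs1
    have habs2' := abs_le.mp habs2
    have hsplitρ : ρ * ⟪dHat j, dHat (j + 1)⟫
        = ρ * ‖dHat (j + 1)‖ ^ 2 - ρ * ⟪R (j + 1) - R j, dHat (j + 1)⟫
          - ρ * ⟪ep - ec, dHat (j + 1)⟫ := by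
      rw [hsplit]; ring
    have hEbd : Ebd = δ * Mlam + 4 * δ * Mlam / γ + ρ * (Mx * δ) := by
      rw [hE]; field_simp
    rw [hLagdiff, hEbd, hTj]
    have hIdep : ρ * ⟪dHat j, ep⟫ ≤ ρ * (Mx * δ) :=
      mul_le_mul_of_nonneg_left habs2'.2 hρ.le
    linarith only [hF2, hF3, hF5, hF6, h8, hF8, hsplitρ, hyoungρ, h13, hquad,
      habs1'.1, hIdep]
  -- ================= summation and division =================
  have hsum : (∑ k ∈ Finset.Icc 1 K,
        (Lag f A b (x (k + 1)) lamStar - Lag f A b xs lamStar))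
      ≤ T 1 + (K : ℝ) * Ebd := by
    calc (∑ k ∈ Finset.Icc 1 K, (Lag f A b (x (k + 1)) lamStar - Lag f A b xs lamStar))
        ≤ ∑ k ∈ Finset.Icc 1 K, ((T k - T (k + 1)) + Ebd) :=
          Finset.sum_le_sum fun k hk => key k (Finset.mem_Icc.mp hk).1
      _ = (T 1 - T (K + 1)) + (K : ℝ) * Ebd := by
          rw [Finset.sum_add_distrib, QADMM.sum_telescope_Icc T K hK, Finset.sum_const, hcard,
            nsmul_eq_mul]
      _ ≤ T 1 + (K : ℝ) * Ebd := by linarith [hTnn (K + 1)]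
  constructor
  · -- Jensen / convexity part
    have hwsum : (∑ _k ∈ Finset.Icc 1 K, (K : ℝ)⁻¹) = 1 := by
      rw [Finset.sum_const, hcard, nsmul_eq_mul, mul_inv_cancel₀ hKne]
    have hjf : ∀ i, f i ((K : ℝ)⁻¹ • ∑ k ∈ Finset.Icc 1 K, x (k + 1) i)
        ≤ ∑ k ∈ Finset.Icc 1 K, (K : ℝ)⁻¹ * f i (x (k + 1) i) := by
      intro i
      rw [Finset.smul_sum]
      have := (hf i).map_sum_le (t := Finset.Icc 1 K) (w := fun _ => (K : ℝ)⁻¹)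
        (p := fun k => x (k + 1) i) (fun _ _ => by positivity) hwsum
        (fun _ _ => Set.mem_univ _)
      simpa [smul_eq_mul] using this
    have hAsum : ∀ i, (A i).mulVec (∑ k ∈ Finset.Icc 1 K, x (k + 1) i)
        = ∑ k ∈ Finset.Icc 1 K, (A i).mulVec (x (k + 1) i) := by
      intro i
      exact map_sum ((A i).mulVecLin) (fun k => (x (k + 1) i).ofLp) (Finset.Icc 1 K)
    have havgR : (∑ i, (WithLp.toLp 2 <| (A i).mulVec ((K : ℝ)⁻¹ • ∑ k ∈ Finset.Icc 1 K, x (k + 1) i))) - b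
        = (K : ℝ)⁻¹ • ∑ k ∈ Finset.Icc 1 K,
            ((∑ i, (WithLp.toLp 2 <| (A i).mulVec (x (k + 1) i))) - b) := by
      have hone : ∀ i, (WithLp.toLp 2 <| (A i).mulVec ((K : ℝ)⁻¹ • ∑ k ∈ Finset.Icc 1 K, x (k + 1) i))
          = (K : ℝ)⁻¹ • ∑ k ∈ Finset.Icc 1 K, (WithLp.toLp 2 <| (A i).mulVec (x (k + 1) i)) := by
        intro i
        rw [Matrix.mulVec_smul, WithLp.ofLp_sum, hAsum i, WithLp.toLp_smul, WithLp.toLp_sum]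
      rw [Finset.sum_congr rfl fun i _ => hone i]
      rw [Finset.sum_sub_distrib, Finset.sum_const, hcard, smul_sub, ← Finset.smul_sum]
      congr 1
      · rw [Finset.sum_comm]
      · rw [← Nat.cast_smul_eq_nsmul ℝ, smul_smul, inv_mul_cancel₀ hKne, one_smul]
    have hLagAvg : Lag f A b (fun i => (K : ℝ)⁻¹ • ∑ k ∈ Finset.Icc 1 K, x (k + 1) i) lamStar
        ≤ (K : ℝ)⁻¹ * ∑ k ∈ Finset.Icc 1 K, Lag f A b (x (k + 1)) lamStar := by
      simp only [Lag, WithLp.ofLp_smul]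
      have hip : ⟪lamStar, (∑ i, (WithLp.toLp 2 <| (A i).mulVec ((K : ℝ)⁻¹ • ∑ k ∈ Finset.Icc 1 K, x (k + 1) i))) - b⟫
          = ∑ k ∈ Finset.Icc 1 K, (K : ℝ)⁻¹
              * ⟪lamStar, (∑ i, (WithLp.toLp 2 <| (A i).mulVec (x (k + 1) i))) - b⟫ := by
        rw [havgR, real_inner_smul_right, inner_sum, Finset.mul_sum]
      rw [hip]
      have hfs : (∑ i, f i ((K : ℝ)⁻¹ • ∑ k ∈ Finset.Icc 1 K, x (k + 1) i))
          ≤ ∑ k ∈ Finset.Icc 1 K, (K : ℝ)⁻¹ * ∑ i, f i (x (k + 1) i) := by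
        calc (∑ i, f i ((K : ℝ)⁻¹ • ∑ k ∈ Finset.Icc 1 K, x (k + 1) i))
            ≤ ∑ i, ∑ k ∈ Finset.Icc 1 K, (K : ℝ)⁻¹ * f i (x (k + 1) i) :=
              Finset.sum_le_sum fun i _ => hjf i
          _ = ∑ k ∈ Finset.Icc 1 K, (K : ℝ)⁻¹ * ∑ i, f i (x (k + 1) i) := by
              rw [Finset.sum_comm]
              exact Finset.sum_congr rfl fun k _ => by rw [Finset.mul_sum]
      calc (∑ i, f i ((K : ℝ)⁻¹ • ∑ k ∈ Finset.Icc 1 K, x (k + 1) i))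
            + ∑ k ∈ Finset.Icc 1 K, (K : ℝ)⁻¹
              * ⟪lamStar, (∑ i, (WithLp.toLp 2 <| (A i).mulVec (x (k + 1) i))) - b⟫
          ≤ (∑ k ∈ Finset.Icc 1 K, (K : ℝ)⁻¹ * ∑ i, f i (x (k + 1) i))
            + ∑ k ∈ Finset.Icc 1 K, (K : ℝ)⁻¹
              * ⟪lamStar, (∑ i, (WithLp.toLp 2 <| (A i).mulVec (x (k + 1) i))) - b⟫ := by linarith
        _ = (K : ℝ)⁻¹ * ∑ k ∈ Finset.Icc 1 K,
              ((∑ i, f i (x (k + 1) i))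
                + ⟪lamStar, (∑ i, (WithLp.toLp 2 <| (A i).mulVec (x (k + 1) i))) - b⟫) := by
            rw [Finset.mul_sum, ← Finset.sum_add_distrib]
            exact Finset.sum_congr rfl fun k _ => by ring
    have hRHS : (K : ℝ)⁻¹ * ∑ k ∈ Finset.Icc 1 K,
          (Lag f A b (x (k + 1)) lamStar - Lag f A b xs lamStar)
        = (K : ℝ)⁻¹ * (∑ k ∈ Finset.Icc 1 K, Lag f A b (x (k + 1)) lamStar)
          - Lag f A b xs lamStar := by
      rw [Finset.sum_sub_distrib, Finset.sum_const, hcard, nsmul_eq_mul, mul_sub,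
        ← mul_assoc, inv_mul_cancel₀ hKne, one_mul]
    rw [hRHS]
    linarith [hLagAvg]
  · -- C/K + E_Δ part
    have hmono := mul_le_mul_of_nonneg_left hsum (le_of_lt (inv_pos.mpr hK0))
    have hsimp : (K : ℝ)⁻¹ * (T 1 + (K : ℝ) * Ebd) = T 1 / K + Ebd := by
      field_simp
    rw [hsimp] at hmono
    have hEle : Ebd ≤ (8 / γ + 4 * |γ - 1| / γ + 2) * Real.sqrt m * Δ * Mlam
        + 4 * ρ * Real.sqrt m * Δ * Mx := by
      have t1 : 0 ≤ |γ - 1| / γ * (Real.sqrt m * Δ * Mlam) :=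
        mul_nonneg (div_nonneg (abs_nonneg _) hγ₀.le)
          (mul_nonneg (mul_nonneg hsm hΔ.le) hMlam)
      have t2 : 0 ≤ ρ * (Real.sqrt m * Δ * Mx) :=
        mul_nonneg hρ.le (mul_nonneg (mul_nonneg hsm hΔ.le) hMx)
      have hEq : (8 / γ + 4 * |γ - 1| / γ + 2) * Real.sqrt m * Δ * Mlam
            + 4 * ρ * Real.sqrt m * Δ * Mx - Ebd
          = 4 * (|γ - 1| / γ * (Real.sqrt m * Δ * Mlam))
            + 2 * (ρ * (Real.sqrt m * Δ * Mx)) := by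
        rw [hE, hδdef]
        field_simp
        ring
      linarith
    have hT1 : T 1 = (1 / 2) * ∑ i, wnormSq (Gm i) (x 1 i - xs i)
        + (1 / (2 * γ * ρ)) * ‖lamHat 1 - lamStar‖ ^ 2 := by simp only [hT]
    calc (K : ℝ)⁻¹ * ∑ k ∈ Finset.Icc 1 K,
          (Lag f A b (x (k + 1)) lamStar - Lag f A b xs lamStar)
        ≤ T 1 / K + Ebd := hmono
      _ ≤ ((1 / 2) * ∑ i, wnormSq (Gm i) (x 1 i - xs i)
              + (1 / (2 * γ * ρ)) * ‖lamHat 1 - lamStar‖ ^ 2) / K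
          + ((8 / γ + 4 * |γ - 1| / γ + 2) * Real.sqrt m * Δ * Mlam
              + 4 * ρ * Real.sqrt m * Δ * Mx) := by
          rw [← hT1]
          exact add_le_add (le_refl _) hEle
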